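/- arXiv:1611.04843 — 9 statements merged into one kernel-verified Lean document; each statement's English description precedes it below -/
import Mathlib

section
/- For all natural numbers x and y, the binomial coefficient C(x,y) is given by the formula C(x,y) = ⌊(2^{x+1}+1)^{x} / 2^{(x+1)·y}⌋ ∸ 2^{x+1}·⌊(2^{x+1}+1)^{x} / 2^{(x+1)·(y+1)}⌋. -/
open Finset

private lemma digit_sum_lt {B : ℕ} (c : ℕ → ℕ) (hB : 0 < B)
    (hc : ∀ k, c k < B) (y : ℕ) :
    ∑ k ∈ range y, c k * B ^ k < B ^ y := by
  induction y with
  | zero => simpa using hB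
  | succ y ih =>
      rw [Finset.sum_range_succ, pow_succ]
      have h1 : c y * B ^ y ≤ (B - 1) * B ^ y :=
        Nat.mul_le_mul_right _ (Nat.le_sub_one_of_lt (hc y))
      calc ∑ k ∈ range y, c k * B ^ k + c y * B ^ y
          < B ^ y + (B - 1) * B ^ y := Nat.add_lt_add_of_lt_of_le ih h1
        _ = (1 + (B - 1)) * B ^ y := by ring
        _ = B * B ^ y := by
            rw [Nat.add_sub_cancel' (Nat.one_le_iff_ne_zero.mpr hB.ne')]
        _ = B ^ y * B := by ring

private lemma key_div (x y : ℕ) :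
    (2 ^ (x + 1) + 1) ^ x / (2 ^ (x + 1)) ^ y
      = ∑ k ∈ Icc y x, Nat.choose x k * (2 ^ (x + 1)) ^ (k - y) := by
  set B := 2 ^ (x + 1) with hB
  have hBpos : 0 < B := Nat.pow_pos (by norm_num)
  have hdig : ∀ k, Nat.choose x k < B := by
    intro k
    have h2 : Nat.choose x k ≤ 2 ^ x := by
      rcases le_or_gt k x with h | h
      · calc Nat.choose x k ≤ ∑ m ∈ range (x + 1), Nat.choose x m :=
              Finset.single_le_sum (fun _ _ => Nat.zero_le _)
                (Finset.mem_range.mpr (Nat.lt_succ_of_le h))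
          _ = 2 ^ x := Nat.sum_range_choose x
      · simp [Nat.choose_eq_zero_of_lt h]
    calc Nat.choose x k ≤ 2 ^ x := h2
      _ < 2 ^ (x + 1) := Nat.pow_lt_pow_succ (by norm_num)
  have hexp : (B + 1) ^ x = ∑ k ∈ range (x + 1), Nat.choose x k * B ^ k := by
    rw [add_pow]
    apply Finset.sum_congr rfl
    intro k _
    push_cast
    ring
  have hsplit := Finset.sum_filter_add_sum_filter_not (range (x + 1))
    (fun k => k < y) (fun k => Nat.choose x k * B ^ k)
  have hlow : ∑ k ∈ (range (x + 1)).filter (fun k => k < y),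
      Nat.choose x k * B ^ k < B ^ y := by
    calc ∑ k ∈ (range (x + 1)).filter (fun k => k < y), Nat.choose x k * B ^ k
        ≤ ∑ k ∈ range y, Nat.choose x k * B ^ k := by
          apply Finset.sum_le_sum_of_subset
          intro k hk
          simp only [Finset.mem_filter, Finset.mem_range] at hk ⊢
          exact hk.2
      _ < B ^ y := digit_sum_lt _ hBpos hdig y
  have hhiset : (range (x + 1)).filter (fun k => ¬ k < y) = Icc y x := by
    ext k
    simp only [Finset.mem_filter, Finset.mem_range, Finset.mem_Icc]
    omega
  have hhi : ∑ k ∈ (range (x + 1)).filter (fun k => ¬ k < y),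
      Nat.choose x k * B ^ k
      = B ^ y * ∑ k ∈ Icc y x, Nat.choose x k * B ^ (k - y) := by
    rw [hhiset, Finset.mul_sum]
    apply Finset.sum_congr rfl
    intro k hk
    rw [Finset.mem_Icc] at hk
    have : B ^ k = B ^ y * B ^ (k - y) := by
      rw [← pow_add]
      congr 1
      omega
    rw [this]
    ring
  have hmain : (B + 1) ^ x
      = ∑ k ∈ (range (x + 1)).filter (fun k => k < y), Nat.choose x k * B ^ k
        + B ^ y * ∑ k ∈ Icc y x, Nat.choose x k * B ^ (k - y) := by
    rw [hexp, ← hsplit, hhi]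
  rw [hmain, Nat.add_mul_div_left _ _ (Nat.pow_pos hBpos),
    Nat.div_eq_of_lt hlow, Nat.zero_add]

theorem binom_formula (x y : ℕ) :
    Nat.choose x y =
      (2 ^ (x + 1) + 1) ^ x / 2 ^ ((x + 1) * y) -
        2 ^ (x + 1) * ((2 ^ (x + 1) + 1) ^ x / 2 ^ ((x + 1) * (y + 1))) := by
  rw [pow_mul, pow_mul, key_div, key_div]
  set B := 2 ^ (x + 1) with hB
  rcases le_or_gt y x with h | h
  · have hins : Icc y x = insert y (Icc (y + 1) x) := by
      ext k
      simp only [Finset.mem_Icc, Finset.mem_insert]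
      omega
    rw [hins, Finset.sum_insert (by simp)]
    have hrw : ∑ k ∈ Icc (y + 1) x, Nat.choose x k * B ^ (k - y)
        = B * ∑ k ∈ Icc (y + 1) x, Nat.choose x k * B ^ (k - (y + 1)) := by
      rw [Finset.mul_sum]
      apply Finset.sum_congr rfl
      intro k hk
      rw [Finset.mem_Icc] at hk
      have : B ^ (k - y) = B * B ^ (k - (y + 1)) := by
        rw [← pow_succ']
        congr 1
        omega
      rw [this]
      ring
    rw [hrw, Nat.sub_self, pow_zero, mul_one, Nat.add_sub_cancel]
  · rw [Finset.Icc_eq_empty (by omega), Finset.Icc_eq_empty (by omega)]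
    simp [Nat.choose_eq_zero_of_lt h]
end

section
/- Let n, l₁ ≥ 1 and l₂ ≥ (n+1)·l₁, and let x₀,…,x_{n−1} ∈ ℕ with x_i < 2^{l₁} for all i and x = ∑_{i=0}^{n−1} x_i·2^{i·l₁}. Then incrx(x,n,l₁,l₂) = ∑_{i=0}^{n−1} x_i·2^{i·l₂}. -/
def rep (x n l : ℕ) : ℕ := x * ((2 ^ (n * l) - 1) / (2 ^ l - 1))

def incrx (x n l₁ l₂ : ℕ) : ℕ := rep x n (l₂ - l₁) &&& rep (2 ^ l₁ - 1) n l₂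

lemma testBit_add_two_pow_mul (c a b i : ℕ) (ha : a < 2 ^ c) :
    (a + 2 ^ c * b).testBit i = if i < c then a.testBit i else b.testBit (i - c) := by
  split_ifs with h
  · have h1 : (a + 2 ^ c * b) % 2 ^ c = a := by
      rw [Nat.add_mul_mod_self_left, Nat.mod_eq_of_lt ha]
    have h2 := Nat.testBit_mod_two_pow (a + 2 ^ c * b) c i
    rw [h1] at h2
    simp [h2, h]
  · have h1 : (a + 2 ^ c * b) / 2 ^ c = b := by
      rw [Nat.add_mul_div_left _ _ (Nat.pow_pos (n := c) (by norm_num)),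
        Nat.div_eq_of_lt ha, zero_add]
    rw [Nat.testBit_eq_decide_div_mod_eq, Nat.testBit_eq_decide_div_mod_eq]
    have h3 : (2:ℕ) ^ i = 2 ^ c * 2 ^ (i - c) := by
      rw [← pow_add]; congr 1; omega
    rw [h3, ← Nat.div_div_eq_div_mul, h1]

lemma and_split (c a b a' b' : ℕ) (ha : a < 2 ^ c) (ha' : a' < 2 ^ c) :
    (a + 2 ^ c * b) &&& (a' + 2 ^ c * b') = (a &&& a') + 2 ^ c * (b &&& b') := by
  have haa : a &&& a' < 2 ^ c := lt_of_le_of_lt Nat.and_le_left ha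
  apply Nat.eq_of_testBit_eq
  intro i
  rw [Nat.testBit_and, testBit_add_two_pow_mul c a b i ha,
    testBit_add_two_pow_mul c a' b' i ha', testBit_add_two_pow_mul c _ _ i haa]
  split_ifs <;> rw [Nat.testBit_and]

lemma and_window (a s w : ℕ) : a &&& (2 ^ s * (2 ^ w - 1)) = 2 ^ s * (a / 2 ^ s % 2 ^ w) := by
  have hpos : 0 < (2:ℕ) ^ s := Nat.pow_pos (n := s) (by norm_num)
  calc a &&& (2 ^ s * (2 ^ w - 1))
      = (a % 2 ^ s + 2 ^ s * (a / 2 ^ s)) &&& (0 + 2 ^ s * (2 ^ w - 1)) := by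
        rw [Nat.mod_add_div, zero_add]
    _ = (a % 2 ^ s &&& 0) + 2 ^ s * (a / 2 ^ s &&& (2 ^ w - 1)) :=
        and_split s _ _ _ _ (Nat.mod_lt _ hpos) hpos
    _ = 2 ^ s * (a / 2 ^ s % 2 ^ w) := by
        rw [Nat.and_zero, zero_add, Nat.and_two_pow_sub_one_eq_mod]

lemma geom_aux (r n : ℕ) : (r - 1) * ∑ j ∈ Finset.range n, r ^ j = r ^ n - 1 := by
  induction n with
  | zero => simp
  | succ n ih =>
    rcases Nat.eq_zero_or_pos r with hr | hr
    · subst hr; simp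
    have h1 : 1 ≤ r ^ n := Nat.one_le_pow _ _ hr
    have h2 : r ^ n ≤ r * r ^ n := Nat.le_mul_of_pos_left _ hr
    rw [Finset.sum_range_succ, mul_add, ih, Nat.sub_mul, one_mul, pow_succ,
      mul_comm (r ^ n) r]
    omega

lemma rep_eq (x n l : ℕ) (hl : 1 ≤ l) :
    rep x n l = x * ∑ j ∈ Finset.range n, 2 ^ (j * l) := by
  unfold rep
  congr 1
  have h2 : (2:ℕ) ≤ 2 ^ l := by
    calc (2:ℕ) = 2 ^ 1 := (pow_one 2).symm
    _ ≤ 2 ^ l := Nat.pow_le_pow_right (by norm_num) hl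
  have hsum : ∑ j ∈ Finset.range n, ((2:ℕ) ^ l) ^ j = ∑ j ∈ Finset.range n, 2 ^ (j * l) := by
    apply Finset.sum_congr rfl
    intro j _
    rw [← pow_mul, mul_comm]
  apply Nat.div_eq_of_eq_mul_left (by omega)
  rw [← hsum, mul_comm _ ((2:ℕ) ^ l - 1), geom_aux, ← pow_mul, mul_comm l n]

lemma sum_lt (l m : ℕ) (xs : ℕ → ℕ) (h : ∀ i < m, xs i < 2 ^ l) :
    ∑ i ∈ Finset.range m, xs i * 2 ^ (i * l) < 2 ^ (m * l) := by
  induction m with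
  | zero => simp
  | succ m ih =>
    have ih' := ih (fun i hi => h i (by omega))
    have hm : xs m < 2 ^ l := h m (by omega)
    rw [Finset.sum_range_succ]
    calc ∑ i ∈ Finset.range m, xs i * 2 ^ (i * l) + xs m * 2 ^ (m * l)
        < 2 ^ (m * l) + xs m * 2 ^ (m * l) := by omega
      _ = (xs m + 1) * 2 ^ (m * l) := by ring
      _ ≤ 2 ^ l * 2 ^ (m * l) := Nat.mul_le_mul_right _ (by omega)
      _ = 2 ^ ((m + 1) * l) := by rw [← pow_add]; ring_nf

lemma digit_eq (l m s : ℕ) (xs : ℕ → ℕ) (h : ∀ i < m, xs i < 2 ^ l) (hs : s < m) :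
    (∑ i ∈ Finset.range m, xs i * 2 ^ (i * l)) / 2 ^ (s * l) % 2 ^ l = xs s := by
  have hm : m = s + (m - s) := by omega
  rw [hm, Finset.sum_range_add]
  have hA : ∑ i ∈ Finset.range s, xs i * 2 ^ (i * l) < 2 ^ (s * l) :=
    sum_lt l s xs (fun i hi => h i (by omega))
  have hB : ∀ i, xs (s + i) * 2 ^ ((s + i) * l) = 2 ^ (s * l) * (xs (s + i) * 2 ^ (i * l)) := by
    intro i; rw [add_mul, pow_add]; ring
  simp_rw [hB]
  rw [← Finset.mul_sum, Nat.add_mul_div_left _ _ (Nat.pow_pos (by norm_num)),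
    Nat.div_eq_of_lt hA, zero_add]
  have hms : m - s = (m - s - 1) + 1 := by omega
  rw [hms, Finset.sum_range_succ']
  simp only [add_zero, zero_mul, mul_zero, pow_zero, mul_one]
  have hC : ∀ i, xs (s + (i + 1)) * 2 ^ ((i + 1) * l) = (xs (s + (i + 1)) * 2 ^ (i * l)) * 2 ^ l := by
    intro i; rw [add_mul, one_mul, pow_add]; ring
  simp_rw [hC]
  rw [← Finset.sum_mul, add_comm, Nat.add_mul_mod_self_right, Nat.mod_eq_of_lt (h s hs)]

lemma main_lemma (l₁ l₂ : ℕ) (hl₁ : 1 ≤ l₁) : ∀ n s x (xs : ℕ → ℕ),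
    (∀ i < n + s, xs i < 2 ^ l₁) → x = ∑ i ∈ Finset.range (n + s), xs i * 2 ^ (i * l₁) →
    (n + s + 1) * l₁ ≤ l₂ →
    (x * ∑ j ∈ Finset.range n, 2 ^ (j * (l₂ - l₁))) &&&
      (2 ^ (s * l₁) * ((2 ^ l₁ - 1) * ∑ j ∈ Finset.range n, 2 ^ (j * l₂)))
    = ∑ j ∈ Finset.range n, xs (j + s) * 2 ^ (s * l₁ + j * l₂) := by
  intro n
  induction n with
  | zero => intro s x xs _ _ _; simp
  | succ n ih =>
    intro s x xs hxs hx hle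
    set d := l₂ - l₁ with hd
    set c := (s + 1) * l₁ with hc
    have e0 : l₁ ≤ (n + 1 + s + 1) * l₁ := Nat.le_mul_of_pos_left _ (by omega)
    have e1 : (s + 1) * l₁ + l₁ = (s + 2) * l₁ := by ring
    have e2 : (s + 2) * l₁ ≤ (n + 1 + s + 1) * l₁ := Nat.mul_le_mul_right _ (by omega)
    have e3 : (n + s + 1) * l₁ + l₁ = (n + 1 + s + 1) * l₁ := by ring
    have e4 : (n + 1 + s) * l₁ + l₁ = (n + 1 + s + 1) * l₁ := by ring
    have e5 : (s + 1) * l₁ = s * l₁ + l₁ := by ring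
    have e6 : (n + (s + 1) + 1) * l₁ = (n + 1 + s + 1) * l₁ := by ring
    have hdl : l₂ = d + l₁ := by omega
    have hcd : c ≤ d := by omega
    have hnd : (n + s + 1) * l₁ ≤ d := by omega
    have hpow2 : ∀ k : ℕ, 0 < (2:ℕ) ^ k := fun k => Nat.pow_pos (n := k) (by norm_num)
    have hxlt : x < 2 ^ ((n + 1 + s) * l₁) := hx ▸ sum_lt l₁ (n + 1 + s) xs hxs
    -- decompose A
    have hA : x * ∑ j ∈ Finset.range (n + 1), 2 ^ (j * d)
        = x % 2 ^ c + 2 ^ c * (x / 2 ^ c + 2 ^ (d - c) * (x * ∑ j ∈ Finset.range n, 2 ^ (j * d))) := by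
      rw [Finset.sum_range_succ']
      simp only [zero_mul, pow_zero]
      have hp : ∀ j, (2:ℕ) ^ ((j + 1) * d) = 2 ^ d * 2 ^ (j * d) := by
        intro j; rw [← pow_add]; congr 1; ring
      simp_rw [hp]
      rw [← Finset.mul_sum]
      have h2 : (2:ℕ) ^ c * (2 ^ (d - c) * (x * ∑ j ∈ Finset.range n, 2 ^ (j * d)))
          = 2 ^ d * (x * ∑ j ∈ Finset.range n, 2 ^ (j * d)) := by
        rw [← mul_assoc, ← pow_add]
        congr 2
        omega
      calc x * (2 ^ d * ∑ j ∈ Finset.range n, 2 ^ (j * d) + 1)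
          = x + 2 ^ d * (x * ∑ j ∈ Finset.range n, 2 ^ (j * d)) := by ring
        _ = x % 2 ^ c + 2 ^ c * (x / 2 ^ c)
            + 2 ^ c * (2 ^ (d - c) * (x * ∑ j ∈ Finset.range n, 2 ^ (j * d))) := by
            rw [Nat.mod_add_div, h2]
        _ = _ := by ring
    -- decompose mask
    have hM : 2 ^ (s * l₁) * ((2 ^ l₁ - 1) * ∑ j ∈ Finset.range (n + 1), 2 ^ (j * l₂))
        = 2 ^ (s * l₁) * (2 ^ l₁ - 1)
          + 2 ^ c * (2 ^ (d - c) * (2 ^ ((s + 1) * l₁)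
            * ((2 ^ l₁ - 1) * ∑ j ∈ Finset.range n, 2 ^ (j * l₂)))) := by
      rw [Finset.sum_range_succ']
      simp only [zero_mul, pow_zero]
      have hp : ∀ j, (2:ℕ) ^ ((j + 1) * l₂) = 2 ^ l₂ * 2 ^ (j * l₂) := by
        intro j; rw [← pow_add]; congr 1; ring
      simp_rw [hp]
      rw [← Finset.mul_sum]
      have h2 : (2:ℕ) ^ c * (2 ^ (d - c) * 2 ^ ((s + 1) * l₁)) = 2 ^ (s * l₁) * 2 ^ l₂ := by
        rw [← pow_add, ← pow_add, ← pow_add]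
        congr 1
        omega
      calc 2 ^ (s * l₁) * ((2 ^ l₁ - 1) * (2 ^ l₂ * ∑ j ∈ Finset.range n, 2 ^ (j * l₂) + 1))
          = 2 ^ (s * l₁) * (2 ^ l₁ - 1)
            + (2 ^ (s * l₁) * 2 ^ l₂) * ((2 ^ l₁ - 1) * ∑ j ∈ Finset.range n, 2 ^ (j * l₂)) := by
            ring
        _ = _ := by rw [← h2]; ring
    rw [hA, hM]
    -- outer split at c
    have hxlo : x % 2 ^ c < 2 ^ c := Nat.mod_lt _ (hpow2 c)
    have hmlo : 2 ^ (s * l₁) * (2 ^ l₁ - 1) < 2 ^ c := by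
      have hcc : (2:ℕ) ^ c = 2 ^ (s * l₁) * 2 ^ l₁ := by
        rw [← pow_add]; congr 1 <;> omega
      have hp := hpow2 l₁
      rw [hcc]
      exact mul_lt_mul_of_pos_left (by omega) (hpow2 _)
    rw [and_split c _ _ _ _ hxlo hmlo]
    -- inner split at d - c
    have hxhi : x / 2 ^ c < 2 ^ (d - c) := by
      rw [Nat.div_lt_iff_lt_mul (hpow2 c), ← pow_add]
      calc x < 2 ^ ((n + 1 + s) * l₁) := hxlt
        _ ≤ 2 ^ (d - c + c) := Nat.pow_le_pow_right (by norm_num) (by omega)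
    have hinner := and_split (d - c) (x / 2 ^ c) (x * ∑ j ∈ Finset.range n, 2 ^ (j * d))
      0 (2 ^ ((s + 1) * l₁) * ((2 ^ l₁ - 1) * ∑ j ∈ Finset.range n, 2 ^ (j * l₂)))
      hxhi (hpow2 _)
    rw [zero_add] at hinner
    rw [hinner, Nat.and_zero, zero_add]
    -- apply IH
    have hih := ih (s + 1) x xs (by intro i hi; exact hxs i (by omega))
      (by rw [show n + (s + 1) = n + 1 + s from by omega]; exact hx)
      (by rw [e6]; exact hle)
    rw [hih]
    -- low window
    have hlow : x % 2 ^ c &&& 2 ^ (s * l₁) * (2 ^ l₁ - 1) = 2 ^ (s * l₁) * xs s := by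
      rw [and_window]
      congr 1
      have hcc : (2:ℕ) ^ c = 2 ^ (s * l₁) * 2 ^ l₁ := by
        rw [← pow_add]; congr 1 <;> omega
      rw [hcc, Nat.mod_mul_right_div_self, Nat.mod_mod_of_dvd _ dvd_rfl, hx]
      exact digit_eq l₁ (n + 1 + s) s xs hxs (by omega)
    rw [hlow]
    -- assemble
    rw [Finset.sum_range_succ']
    simp only [zero_mul, zero_add, add_zero]
    rw [add_comm]
    congr 1
    rw [Finset.mul_sum, Finset.mul_sum]
    apply Finset.sum_congr rfl
    intro j _
    have e7 : (j + 1) * l₂ = j * l₂ + l₂ := by ring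
    have harg : j + (s + 1) = j + 1 + s := by omega
    rw [← mul_assoc, ← pow_add, harg, ← mul_assoc,
      mul_comm ((2:ℕ) ^ (c + (d - c))) (xs (j + 1 + s)), mul_assoc, ← pow_add]
    congr 2
    omega
    exact mul_comm _ _

theorem incrx_eq_sum (n l₁ l₂ x : ℕ) (xs : ℕ → ℕ)
    (hn : 1 ≤ n) (hl₁ : 1 ≤ l₁) (hl₂ : (n + 1) * l₁ ≤ l₂)
    (hxs : ∀ i < n, xs i < 2 ^ l₁)
    (hx : x = ∑ i ∈ Finset.range n, xs i * 2 ^ (i * l₁)) :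
    incrx x n l₁ l₂ = ∑ i ∈ Finset.range n, xs i * 2 ^ (i * l₂) := by
  have e2 : 2 * l₁ ≤ (n + 1) * l₁ := Nat.mul_le_mul_right _ (by omega)
  have h1 : 1 ≤ l₂ - l₁ := by omega
  have h2 : 1 ≤ l₂ := by omega
  unfold incrx
  rw [rep_eq _ _ _ h1, rep_eq _ _ _ h2]
  have hm := main_lemma l₁ l₂ hl₁ n 0 x xs (by simpa using hxs) (by simpa using hx)
    (by simpa using hl₂)
  simp only [Nat.zero_mul, pow_zero, one_mul, Nat.add_zero, Nat.zero_add, zero_add,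
    add_zero, zero_mul] at hm
  rw [hm]
end

section
/- For every l ≥ 1, setting S = ⌊(2^{l²} ∸ 1)/(2^{l} ∸ 1)⌋ (so that S = ∑_{i=0}^{l−1} 2^{i·l}), one has S² = ∑_{i=0}^{l−1} (i+1)·2^{i·l} + ∑_{i=l}^{2·l−2} (2·l−1−i)·2^{i·l}, and consequently rm(⌊S² / 2^{l·(l−1)}⌋, 2^{l}) = l. -/
open Finset

lemma gs_card_pairs (n k : ℕ) (hk : k < 2 * n - 1) :
    ((Finset.range n ×ˢ Finset.range n).filter (fun p => p.1 + p.2 = k)).card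
      = min (k + 1) (2 * n - 1 - k) := by
  have himg : (Finset.range n ×ˢ Finset.range n).filter (fun p => p.1 + p.2 = k)
      = (Finset.Ico (k + 1 - n) (min (k + 1) n)).image (fun i => (i, k - i)) := by
    ext p
    simp only [mem_filter, mem_product, mem_range, mem_image, Finset.mem_Ico]
    constructor
    · rintro ⟨⟨h1, h2⟩, h3⟩
      exact ⟨p.1, by omega, by obtain ⟨a, b⟩ := p; simp_all; omega⟩
    · rintro ⟨i, hi, rfl⟩
      simp only []
      omega
  rw [himg, Finset.card_image_of_injective _ (fun a b h => (Prod.mk.injEq _ _ _ _ ▸ h).1),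
    Nat.card_Ico]
  omega

lemma gs_key (x n : ℕ) (hn : 1 ≤ n) :
    (∑ i ∈ Finset.range n, x ^ i) ^ 2
      = ∑ k ∈ Finset.range (2 * n - 1), min (k + 1) (2 * n - 1 - k) * x ^ k := by
  rw [sq, Finset.sum_mul_sum]
  have h1 : ∀ i ∈ Finset.range n, ∀ j ∈ Finset.range n, x ^ i * x ^ j = x ^ (i + j) := by
    intro i _ j _; rw [← pow_add]
  rw [Finset.sum_congr rfl (fun i hi => Finset.sum_congr rfl (fun j hj => h1 i hi j hj))]
  rw [← Finset.sum_product']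
  have hmaps : ∀ p ∈ Finset.range n ×ˢ Finset.range n, p.1 + p.2 ∈ Finset.range (2 * n - 1) := by
    intro p hp
    simp only [mem_product, mem_range] at hp ⊢
    omega
  rw [← Finset.sum_fiberwise_of_maps_to hmaps (fun p => x ^ (p.1 + p.2))]
  refine Finset.sum_congr rfl fun k hk => ?_
  rw [Finset.sum_congr rfl (fun p hp => by
    rw [(Finset.mem_filter.mp hp).2]),
    Finset.sum_const, gs_card_pairs n k (Finset.mem_range.mp hk), smul_eq_mul]

lemma gs_geom (x n : ℕ) (hx : 1 ≤ x) :
    (x - 1) * ∑ i ∈ Finset.range n, x ^ i = x ^ n - 1 := by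
  induction n with
  | zero => simp
  | succ n ih =>
    rw [Finset.sum_range_succ, Nat.mul_add, ih, pow_succ, mul_comm (x ^ n) x]
    have h1 : 1 ≤ x ^ n := Nat.one_le_pow _ _ hx
    have h2 : x ^ n ≤ x * x ^ n := Nat.le_mul_of_pos_left _ hx
    rw [Nat.sub_one_mul]
    omega

lemma gs_small_sum (M n : ℕ) (c : ℕ → ℕ) (hc : ∀ i < n, c i < M) :
    ∑ i ∈ Finset.range n, c i * M ^ i < M ^ n := by
  induction n with
  | zero => simp
  | succ n ih =>
    rw [Finset.sum_range_succ, pow_succ]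
    have h1 := ih (fun i hi => hc i (by omega))
    have h2 : c n + 1 ≤ M := hc n (by omega)
    nlinarith [pow_pos (show 0 < M by omega) n]

def rm (x y : ℕ) : ℕ := if y = 0 then 0 else x % y

theorem geom_square (l : ℕ) (hl : 1 ≤ l) (S : ℕ)
    (hS : S = (2 ^ l ^ 2 - 1) / (2 ^ l - 1)) :
    S = ∑ i ∈ Finset.range l, 2 ^ (i * l) ∧
    S ^ 2 = (∑ i ∈ Finset.range l, (i + 1) * 2 ^ (i * l)) +
      ∑ i ∈ Finset.Ico l (2 * l - 1), (2 * l - 1 - i) * 2 ^ (i * l) ∧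
    rm (S ^ 2 / 2 ^ (l * (l - 1))) (2 ^ l) = l := by
  have hx : (1:ℕ) ≤ 2 ^ l := Nat.one_le_two_pow
  have hx2 : (2:ℕ) ≤ 2 ^ l := by
    calc (2:ℕ) = 2 ^ 1 := rfl
    _ ≤ 2 ^ l := Nat.pow_le_pow_right (by norm_num) hl
  have hpow : ∀ i : ℕ, (2:ℕ) ^ (i * l) = (2 ^ l) ^ i := fun i => by
    rw [← pow_mul, mul_comm]
  have hgeom := gs_geom (2 ^ l) l hx
  have hll : (2:ℕ) ^ l ^ 2 = (2 ^ l) ^ l := by rw [← pow_mul, sq]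
  have h1 : S = ∑ i ∈ Finset.range l, 2 ^ (i * l) := by
    rw [hS, hll, ← hgeom, Nat.mul_div_cancel_left _ (by omega)]
    exact Finset.sum_congr rfl fun i _ => (hpow i).symm
  refine ⟨h1, ?_⟩
  -- part 2
  have h2 : S ^ 2 = (∑ i ∈ Finset.range l, (i + 1) * 2 ^ (i * l)) +
      ∑ i ∈ Finset.Ico l (2 * l - 1), (2 * l - 1 - i) * 2 ^ (i * l) := by
    rw [h1, Finset.sum_congr rfl fun i _ => (hpow i), gs_key (2 ^ l) l hl]
    rw [Finset.range_eq_Ico,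
      ← Finset.sum_Ico_consecutive _ (Nat.zero_le l) (by omega : l ≤ 2 * l - 1),
      ← Finset.range_eq_Ico]
    congr 1
    · refine Finset.sum_congr rfl fun k hk => ?_
      rw [hpow k]
      have hkl := Finset.mem_range.mp hk
      congr 1
      omega
    · refine Finset.sum_congr rfl fun k hk => ?_
      rw [hpow k]
      have hkl := Finset.mem_Ico.mp hk
      congr 1
      omega
  refine ⟨h2, ?_⟩
  -- part 3
  have hrange : Finset.range l = Finset.range (l - 1 + 1) := by congr 1; omega
  set A' := ∑ i ∈ Finset.range (l - 1), (i + 1) * 2 ^ (i * l) with hA'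
  have hsplit : ∑ i ∈ Finset.range l, (i + 1) * 2 ^ (i * l)
      = A' + l * 2 ^ ((l - 1) * l) := by
    rw [hrange, Finset.sum_range_succ, hA']
    congr 2
    omega
  have hA'lt : A' < 2 ^ (l * (l - 1)) := by
    have : A' < (2 ^ l) ^ (l - 1) := by
      rw [hA', Finset.sum_congr rfl fun i _ => by rw [hpow i]]
      exact gs_small_sum (2 ^ l) (l - 1) (fun i => i + 1)
        (fun i hi => show i + 1 < 2 ^ l by have := Nat.lt_two_pow_self (n := l); omega)
    rwa [← pow_mul] at this
  obtain ⟨b, hb⟩ : (2 ^ (l * (l - 1)) * 2 ^ l) ∣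
      ∑ i ∈ Finset.Ico l (2 * l - 1), (2 * l - 1 - i) * 2 ^ (i * l) := by
    refine Finset.dvd_sum fun i hi => Dvd.dvd.mul_left ?_ _
    have hil := (Finset.mem_Ico.mp hi).1
    rw [← pow_add]
    refine pow_dvd_pow 2 ?_
    have : l * l ≤ i * l := Nat.mul_le_mul_right l hil
    have : l * (l - 1) + l = l * l := by rw [← Nat.mul_succ]; congr 1; omega
    omega
  have hS2 : S ^ 2 = A' + 2 ^ (l * (l - 1)) * (l + 2 ^ l * b) := by
    rw [h2, hsplit, hb, mul_comm (l - 1) l]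
    ring
  have hdiv : S ^ 2 / 2 ^ (l * (l - 1)) = l + 2 ^ l * b := by
    rw [hS2, Nat.add_mul_div_left _ _ (Nat.pow_pos (by norm_num)),
      Nat.div_eq_of_lt hA'lt, Nat.zero_add]
  rw [rm, if_neg (by positivity), hdiv, Nat.add_mul_mod_self_left,
    Nat.mod_eq_of_lt (Nat.lt_two_pow_self (n := l))]
end

section
/- Define g(z) = 2^{⌊log₂(2·z)⌋²}. Then for all x, y ∈ ℕ: x·y = ⌊g(g(x+y)) / ⌊⌊g(g(x+y))/x⌋ / y⌋⌋. In particular, multiplication is recoverable from the successor-free operations of addition, integer division, and the function 2^{⌊log₂ z⌋²}. -/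
def g (z : ℕ) : ℕ := 2 ^ (Nat.log 2 (2 * z)) ^ 2

lemma div_div_self_cancel (N m : ℕ) (hm : 0 < m) (h : m ^ 2 ≤ N) :
    N / (N / m) = m := by
  have hN : 0 < N := lt_of_lt_of_le (by positivity) h
  set q := N / m with hq
  have hmq : m ≤ q := (Nat.le_div_iff_mul_le hm).2 (by nlinarith)
  have hq0 : 0 < q := lt_of_lt_of_le hm hmq
  have h1 : m ≤ N / q := (Nat.le_div_iff_mul_le hq0).2 (by
    rw [mul_comm]; exact Nat.div_mul_le_self N m)
  have h2 : N / q < m + 1 := by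
    rw [Nat.div_lt_iff_lt_mul hq0]
    have : N < (q + 1) * m := by
      have h1 := Nat.div_add_mod N m
      have h2 := Nat.mod_lt N hm
      rw [← hq] at h1
      nlinarith [h1, h2]
    calc N < (q + 1) * m := this
      _ = q * m + m := by ring
      _ ≤ q * m + q := by omega
      _ = (m + 1) * q := by ring
  omega

lemma pow4_le_gg (z : ℕ) (hz : 1 ≤ z) : z ^ 4 ≤ g (g z) := by
  set k := Nat.log 2 (2 * z) with hk
  have hk1 : 1 ≤ k := by
    have h : Nat.log 2 2 ≤ Nat.log 2 (2 * z) := Nat.log_mono_right (by omega)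
    have h2 : Nat.log 2 2 = 1 := by
      have := Nat.log_pow (b := 2) (by norm_num) 1
      simpa using this
    omega
  have hzk : z ≤ 2 ^ k := by
    have h2 : 2 * z < 2 ^ (k + 1) := Nat.lt_pow_succ_log_self (by norm_num) _
    have e : 2 ^ (k + 1) = 2 * 2 ^ k := by rw [pow_succ]; ring
    omega
  have hgz : g z = 2 ^ (k ^ 2) := rfl
  have hggz : g (g z) = 2 ^ ((k ^ 2 + 1) ^ 2) := by
    rw [hgz]
    show 2 ^ (Nat.log 2 (2 * 2 ^ k ^ 2)) ^ 2 = _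
    have : 2 * 2 ^ k ^ 2 = 2 ^ (k ^ 2 + 1) := by rw [pow_succ (2 : ℕ) (k ^ 2)]; ring
    rw [this, Nat.log_pow (by norm_num)]
  rw [hggz]
  calc z ^ 4 ≤ (2 ^ k) ^ 4 := Nat.pow_le_pow_left hzk 4
    _ = 2 ^ (4 * k) := by rw [← pow_mul, mul_comm]
    _ ≤ 2 ^ ((k ^ 2 + 1) ^ 2) := Nat.pow_le_pow_right (by norm_num) (by
        have hk1' : (1:ℤ) ≤ (k:ℤ) := by exact_mod_cast hk1
        have : (4:ℤ) * k ≤ ((k:ℤ) ^ 2 + 1) ^ 2 := by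
          nlinarith [sq_nonneg ((k:ℤ) ^ 2 - 1), sq_nonneg ((k:ℤ) - 1)]
        exact_mod_cast this)

theorem mul_from_div (x y : ℕ) :
    x * y = g (g (x + y)) / (g (g (x + y)) / x / y) := by
  rcases Nat.eq_zero_or_pos x with hx | hx
  · simp [hx]
  rcases Nat.eq_zero_or_pos y with hy | hy
  · simp [hy]
  rw [Nat.div_div_eq_div_mul]
  have hs : 1 ≤ x + y := by omega
  have hle : (x * y) ^ 2 ≤ g (g (x + y)) := by
    have hxy : x * y ≤ (x + y) ^ 2 := by nlinarith
    calc (x * y) ^ 2 ≤ ((x + y) ^ 2) ^ 2 := Nat.pow_le_pow_left hxy 2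
      _ = (x + y) ^ 4 := by ring
      _ ≤ g (g (x + y)) := pow4_le_gg _ hs
  exact (div_div_self_cancel _ _ (by positivity) hle).symm
end

section
/- Let c, r ≥ 1, let u₀,…,u_{r−1} ∈ ℕ with u_i < 2^{c} for all i, and set p = ∑_{i=0}^{r−1} u_i·2^{c·i}. Assume 2^{c·r−1} ≤ p (i.e. the binary representation of p has exactly c·r digits). Then for every t ∈ ℕ: rm(R(p, c·t), 2^{c}) = u_{t mod r}. -/
/-- Cyclic shift of the binary representation of `x` by `y` positions to the right. -/
def R (x y : ℕ) : ℕ :=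
  if x ≤ 1 then x
  else ∑ j ∈ Finset.range (Nat.log 2 x + 1),
    (if x.testBit ((j + y) % (Nat.log 2 x + 1)) then 1 else 0) * 2 ^ j

lemma testBit_div_pow (x n i : ℕ) : (x / 2 ^ n).testBit i = x.testBit (n + i) := by
  rw [Nat.testBit_eq_decide_div_mod_eq, Nat.testBit_eq_decide_div_mod_eq, Nat.div_div_eq_div_mul, ← pow_add]

lemma sum_testBit_eq (x n : ℕ) :
    ∑ j ∈ Finset.range n, (if x.testBit j then 1 else 0) * 2 ^ j = x % 2 ^ n := by
  induction n with
  | zero => simp [Nat.mod_one]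
  | succ n ih =>
    rw [Finset.sum_range_succ, ih, Nat.mod_pow_succ, Nat.testBit_eq_decide_div_mod_eq]
    have h2 : x / 2 ^ n % 2 < 2 := Nat.mod_lt _ (by norm_num)
    interval_cases h : x / 2 ^ n % 2 <;> simp [h] <;> ring

lemma lowsum_lt (b r : ℕ) (u : ℕ → ℕ) (hu : ∀ k < r, u k < b) :
    ∑ k ∈ Finset.range r, u k * b ^ k < b ^ r := by
  induction r with
  | zero => simp
  | succ r ih =>
    have hb : 1 ≤ b := Nat.pos_of_ne_zero fun h => by simpa [h] using hu r (by omega)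
    have h1 : ∑ k ∈ Finset.range r, u k * b ^ k < b ^ r := ih fun k hk => hu k (by omega)
    have h2 : u r * b ^ r ≤ (b - 1) * b ^ r :=
      Nat.mul_le_mul_right _ (by have := hu r (by omega); omega)
    rw [Finset.sum_range_succ]
    have : b ^ r + (b - 1) * b ^ r = b ^ (r + 1) := by
      have : b ^ r + (b - 1) * b ^ r = (1 + (b - 1)) * b ^ r := by ring
      rw [this, pow_succ]; rw [show 1 + (b - 1) = b by omega]; ring
    omega

lemma block_extract (b r : ℕ) (u : ℕ → ℕ) (hu : ∀ k < r, u k < b) (i : ℕ) (hi : i < r) :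
    (∑ k ∈ Finset.range r, u k * b ^ k) / b ^ i % b = u i := by
  have hb : 1 ≤ b := Nat.pos_of_ne_zero fun h => by simpa [h] using hu i hi
  have hsplit : ∑ k ∈ Finset.range r, u k * b ^ k
      = (∑ k ∈ Finset.range i, u k * b ^ k)
        + ∑ k ∈ Finset.Ico i r, u k * b ^ k := by
    rw [Finset.range_eq_Ico, ← Finset.sum_Ico_consecutive _ (Nat.zero_le i) hi.le, Finset.range_eq_Ico]
  have hre : ∑ k ∈ Finset.Ico i r, u k * b ^ k
      = b ^ i * ∑ j ∈ Finset.range (r - i), u (i + j) * b ^ j := by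
    rw [Finset.sum_Ico_eq_sum_range, Finset.mul_sum]
    refine Finset.sum_congr rfl fun j hj => ?_
    rw [pow_add]; ring_nf
  have hlow : ∑ k ∈ Finset.range i, u k * b ^ k < b ^ i :=
    lowsum_lt b i u (fun k hk => hu k (by omega))
  rw [hsplit, hre, Nat.add_mul_div_left _ _ (Nat.pow_pos (n := i) hb),
    Nat.div_eq_of_lt hlow, Nat.zero_add]
  have hri : r - i = (r - i - 1) + 1 := by omega
  rw [hri, Finset.sum_range_succ']
  simp only [pow_zero, mul_one, pow_succ]
  have : ∑ j ∈ Finset.range (r - i - 1), u (i + (j + 1)) * (b ^ j * b)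
      = (∑ j ∈ Finset.range (r - i - 1), u (i + (j + 1)) * b ^ j) * b := by
    rw [Finset.sum_mul]; refine Finset.sum_congr rfl fun j _ => by ring
  rw [this, Nat.mul_add_mod', Nat.add_zero, Nat.mod_eq_of_lt (hu i hi)]

theorem rm_R_blocks (c r : ℕ) (hc : 1 ≤ c) (hr : 1 ≤ r) (u : ℕ → ℕ)
    (hu : ∀ i < r, u i < 2 ^ c) (p : ℕ)
    (hp : p = ∑ i ∈ Finset.range r, u i * 2 ^ (c * i))
    (hlen : 2 ^ (c * r - 1) ≤ p) (t : ℕ) :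
    rm (R p (c * t)) (2 ^ c) = u (t % r) := by
  have hpow : ∀ i : ℕ, (2 ^ c : ℕ) ^ i = 2 ^ (c * i) := fun i => by rw [← pow_mul]
  have hplt : p < 2 ^ (c * r) := by
    rw [hp, ← hpow]
    have := lowsum_lt (2 ^ c) r u hu
    simpa [hpow] using this
  have hbit : ∀ i < r, ∀ j < c, p.testBit (c * i + j) = (u i).testBit j := by
    intro i hi j hj
    have hblock : p / 2 ^ (c * i) % 2 ^ c = u i := by
      rw [hp, ← hpow]
      have := block_extract (2 ^ c) r u hu i hi
      simpa [hpow] using this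
    rw [← hblock, Nat.testBit_mod_two_pow, testBit_div_pow]
    simp [hj]
  have h2c : (2 : ℕ) ^ c ≠ 0 := by positivity
  rw [rm, if_neg h2c]
  have htr : t % r < r := Nat.mod_lt t hr
  by_cases hple : p ≤ 1
  · -- then c = r = 1 and p = 1
    have hcrpos : 1 ≤ c * r := Nat.mul_pos hc hr
    have hcr : c * r = 1 := by
      by_contra h
      have : 2 ≤ c * r := by omega
      have : (2:ℕ) ≤ 2 ^ (c * r - 1) := by
        calc (2:ℕ) = 2 ^ 1 := by norm_num
        _ ≤ 2 ^ (c * r - 1) := Nat.pow_le_pow_right (by norm_num) (by omega)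
      omega
    have hc1 : c = 1 := by
      have := Nat.le_of_dvd one_pos ⟨r, hcr.symm⟩; omega
    have hr1 : r = 1 := by
      have := Nat.le_of_dvd one_pos ⟨c, by rw [mul_comm]; exact hcr.symm⟩; omega
    have hp1 : p = 1 := by
      have : (1:ℕ) ≤ p := by simpa [hcr] using hlen
      omega
    have hu0 : u 0 = 1 := by
      rw [hr1] at hp; simp at hp; omega
    rw [hr1]
    simp [R, hp1, hu0, Nat.mod_one]
    omega
  · push_neg at hple
    have hlog : Nat.log 2 p = c * r - 1 :=
      Nat.log_eq_of_pow_le_of_lt_pow hlen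
        (by rw [show c * r - 1 + 1 = c * r from Nat.succ_pred_eq_of_pos (Nat.mul_pos hc hr)]
            exact hplt)
    have hcr1 : c * r - 1 + 1 = c * r := Nat.succ_pred_eq_of_pos (Nat.mul_pos hc hr)
    rw [R, if_neg (by omega), hlog, hcr1]
    -- index simplification for j < c
    have hidx : ∀ j < c, (j + c * t) % (c * r) = c * (t % r) + j := by
      intro j hj
      have ht := Nat.div_add_mod t r
      have hsplit2 : j + c * t = (j + c * (t % r)) + (c * r) * (t / r) := by
        conv_lhs => rw [← ht]
        ring
      have hlt : j + c * (t % r) < c * r := by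
        have h5 : t % r + 1 ≤ r := by omega
        have h6 : c * (t % r) + c ≤ c * r := by
          calc c * (t % r) + c = c * (t % r + 1) := by ring
          _ ≤ c * r := Nat.mul_le_mul_left c h5
        omega
      rw [hsplit2, Nat.add_mul_mod_self_left, Nat.mod_eq_of_lt hlt, Nat.add_comm]
    -- split the sum
    have hcc : c ≤ c * r := Nat.le_mul_of_pos_right c hr
    rw [Finset.range_eq_Ico, ← Finset.sum_Ico_consecutive _ (Nat.zero_le c) hcc,
      ← Finset.range_eq_Ico]
    have hhigh : ∑ j ∈ Finset.Ico c (c * r),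
        (if p.testBit ((j + c * t) % (c * r)) then 1 else 0) * 2 ^ j
        = 2 ^ c * ∑ j ∈ Finset.range (c * r - c),
          (if p.testBit ((c + j + c * t) % (c * r)) then 1 else 0) * 2 ^ j := by
      rw [Finset.sum_Ico_eq_sum_range, Finset.mul_sum]
      refine Finset.sum_congr rfl fun j hj => ?_
      rw [pow_add]; ring_nf
    rw [hhigh, Nat.add_mul_mod_self_left]
    have hlow2 : ∑ j ∈ Finset.range c,
        (if p.testBit ((j + c * t) % (c * r)) then 1 else 0) * 2 ^ j
        = ∑ j ∈ Finset.range c, (if (u (t % r)).testBit j then 1 else 0) * 2 ^ j := by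
      refine Finset.sum_congr rfl fun j hj => ?_
      rw [Finset.mem_range] at hj
      rw [hidx j hj, hbit (t % r) htr j hj]
    rw [hlow2, sum_testBit_eq, Nat.mod_eq_of_lt (hu _ htr), Nat.mod_eq_of_lt (hu _ htr)]
end

section
/- Let r ≥ 1 and u₀,…,u_{r−1}, v₀,…,v_{r−1} ∈ ℕ, and for each i ∈ ℕ define f_i : ℕ → ℕ by: f_i(x) = x if i mod r = r−1; otherwise f_i(x) = x + v_{i mod r} when x ∧ u_{i mod r} = 0, and f_i(x) = x when x ∧ u_{i mod r} ≠ 0. Suppose t₀, p₁, p₂, c₁, c₂, x ∈ ℕ satisfy: t₀ ≥ 1; u_{r−1} = 2^{c₁} − 1; 2^{c₂−1} ≤ v_{r−1} < 2^{c₂}; p₁ = ∑_{i=0}^{r−1} 2^{c₁·i}·u_i; p₂ = ∑_{i=0}^{r−1} 2^{c₂·i}·v_i; x + 2·p₂·t₀ < 2^{c₁}; x + t₀·max(v₀,…,v_{r−2}) < 2^{c₂} (where the maximum over the empty list, arising when r = 1, is 0); u_i < 2^{c₂} for all 0 ≤ i ≤ r−2; c₁ ≥ c₂; and x ≥ 1.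 Then Q(x,p₁,p₂,c₁,c₂,t₀) mod 2^{c₂} = f_{t₀−1}(f_{t₀−2}(⋯ f_0(x) ⋯)). -/
def Q (x p₁ p₂ c₁ c₂ : ℕ) : ℕ → ℕ
  | 0 => x
  | t + 1 =>
    if Q x p₁ p₂ c₁ c₂ t &&& R p₁ (c₁ * t) ≠ 0 then Q x p₁ p₂ c₁ c₂ t
    else Q x p₁ p₂ c₁ c₂ t + R p₂ (c₂ * t)


lemma and_mod_left {a b c : ℕ} (h : a < 2 ^ c) : a &&& b = a &&& (b % 2 ^ c) := by
  apply Nat.eq_of_testBit_eq; intro i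
  simp only [Nat.testBit_and, Nat.testBit_mod_two_pow]
  rcases lt_or_ge i c with hi | hi
  · simp [hi]
  · have : a.testBit i = false :=
      Nat.testBit_lt_two_pow (lt_of_lt_of_le h (Nat.pow_le_pow_right (by norm_num) hi))
    simp [this]

lemma and_mod_right {a b c : ℕ} (h : b < 2 ^ c) : a &&& b = (a % 2 ^ c) &&& b := by
  rw [Nat.and_comm, and_mod_left h, Nat.and_comm]

lemma sum_bits : ∀ m : ℕ, ∀ y < 2 ^ m,
    ∑ j ∈ Finset.range m, (if y.testBit j then 1 else 0) * 2 ^ j = y := by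
  intro m
  induction m with
  | zero => intro y hy; interval_cases y; simp
  | succ m ih =>
    intro y hy
    have h2 : y / 2 < 2 ^ m := by
      have : (2:ℕ) ^ (m+1) = 2 ^ m * 2 := by ring
      omega
    have hbit : ∀ j, y.testBit (j+1) = (y/2).testBit j := fun j => Nat.testBit_succ y j
    rw [Finset.sum_range_succ']
    have : ∑ k ∈ Finset.range m, (if y.testBit (k+1) then 1 else 0) * 2 ^ (k+1)
        = (∑ k ∈ Finset.range m, (if (y/2).testBit k then 1 else 0) * 2 ^ k) * 2 := by
      rw [Finset.sum_mul]
      apply Finset.sum_congr rfl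
      intro k _
      rw [hbit k]; ring
    rw [this, ih _ h2]
    have h0 : (if y.testBit 0 then 1 else 0) = y % 2 := by
      rw [Nat.testBit_zero]
      rcases Nat.mod_two_eq_zero_or_one y with h | h <;> simp [h]
    rw [h0]; simp; omega

lemma blocks_lt (c : ℕ) : ∀ (r : ℕ) (w : ℕ → ℕ), (∀ i < r, w i < 2 ^ c) →
    ∑ i ∈ Finset.range r, 2 ^ (c * i) * w i < 2 ^ (c * r) := by
  intro r
  induction r with
  | zero => intro w _; simp
  | succ r ih =>
    intro w hw
    rw [Finset.sum_range_succ]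
    have h1 := ih w (fun i hi => hw i (by omega))
    have h2 : w r ≤ 2 ^ c - 1 := by have := hw r (by omega); omega
    have hpos : (1:ℕ) ≤ 2 ^ c := Nat.one_le_two_pow
    calc ∑ i ∈ Finset.range r, 2 ^ (c * i) * w i + 2 ^ (c * r) * w r
        < 2 ^ (c * r) + 2 ^ (c * r) * (2 ^ c - 1) := by
          have := Nat.mul_le_mul_left (2 ^ (c * r)) h2; omega
      _ ≤ 2 ^ (c * r) * 2 ^ c := by
          have : 2 ^ (c * r) * (2 ^ c - 1) = 2 ^ (c * r) * 2 ^ c - 2 ^ (c*r) := by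
            rw [Nat.mul_sub]; ring_nf
          have h3 : 2 ^ (c*r) ≤ 2 ^ (c*r) * 2 ^ c := Nat.le_mul_of_pos_right _ (by positivity)
          omega
      _ = 2 ^ (c * (r+1)) := by rw [← pow_add]; ring_nf

lemma blocks_split (c r : ℕ) (hr : 1 ≤ r) (w : ℕ → ℕ) :
    ∑ i ∈ Finset.range r, 2 ^ (c * i) * w i
      = w 0 + 2 ^ c * ∑ i ∈ Finset.range (r-1), 2 ^ (c * i) * w (i+1) := by
  obtain ⟨r', rfl⟩ : ∃ r', r = r' + 1 := ⟨r - 1, by omega⟩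
  rw [Finset.sum_range_succ']
  simp only [Nat.add_sub_cancel, mul_zero, pow_zero, one_mul]
  rw [Finset.mul_sum]
  rw [add_comm]
  congr 1
  apply Finset.sum_congr rfl
  intro i _
  rw [mul_add, pow_add, mul_one]; ring

lemma blocks_div_mod (c : ℕ) : ∀ (i r : ℕ) (w : ℕ → ℕ), i < r → (∀ j < r, w j < 2 ^ c) →
    (∑ j ∈ Finset.range r, 2 ^ (c * j) * w j) / 2 ^ (c * i) % 2 ^ c = w i := by
  intro i
  induction i with
  | zero =>
    intro r w hi hw
    rw [blocks_split c r (by omega) w]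
    simp only [mul_zero, pow_zero, Nat.div_one]
    rw [add_comm, Nat.mul_add_mod, Nat.mod_eq_of_lt (hw 0 hi)]
  | succ i ih =>
    intro r w hi hw
    rw [blocks_split c r (by omega) w]
    have : 2 ^ (c * (i+1)) = 2 ^ c * 2 ^ (c * i) := by rw [← pow_add]; ring_nf
    rw [this]
    have hw0 : w 0 < 2 ^ c := hw 0 (by omega)
    have hdiv : (w 0 + 2 ^ c * ∑ j ∈ Finset.range (r-1), 2 ^ (c * j) * w (j+1)) / (2 ^ c * 2 ^ (c * i))
        = (∑ j ∈ Finset.range (r-1), 2 ^ (c * j) * w (j+1)) / 2 ^ (c * i) := by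
      rw [← Nat.div_div_eq_div_mul]
      congr 1
      rw [add_comm, Nat.mul_add_div (by positivity), Nat.div_eq_of_lt hw0, add_zero]
    rw [hdiv]
    exact ih (r-1) (fun j => w (j+1)) (by omega) (fun j hj => hw (j+1) (by omega))

lemma blocks_testBit (c r i s : ℕ) (w : ℕ → ℕ) (hi : i < r) (hs : s < c)
    (hw : ∀ j < r, w j < 2 ^ c) :
    (∑ j ∈ Finset.range r, 2 ^ (c * j) * w j).testBit (c * i + s) = (w i).testBit s := by
  set p := ∑ j ∈ Finset.range r, 2 ^ (c * j) * w j with hp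
  have h1 : (w i).testBit s = (p / 2 ^ (c * i) % 2 ^ c).testBit s := by
    rw [blocks_div_mod c i r w hi hw]
  rw [h1, Nat.testBit_mod_two_pow]
  simp only [hs, decide_true, Bool.true_and]
  rw [← Nat.shiftRight_eq_div_pow, Nat.testBit_shiftRight]
lemma sum_grid {M : Type*} [AddCommMonoid M] (g : ℕ → M) (c : ℕ) : ∀ r : ℕ,
    ∑ j ∈ Finset.range (c * r), g j = ∑ i ∈ Finset.range r, ∑ s ∈ Finset.range c, g (c * i + s) := by
  intro r
  induction r with
  | zero => simp
  | succ r ih =>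
    have : c * (r + 1) = c * r + c := by ring
    rw [this, Finset.sum_range_add, ih, Finset.sum_range_succ]

lemma grid_mod (c r i s t : ℕ) (hi : i < r) (hs : s < c) :
    (c * i + s + c * t) % (c * r) = c * ((i + t) % r) + s := by
  set m := (i + t) % r with hm
  set q := (i + t) / r with hq
  have h1 : i + t = r * q + m := (Nat.div_add_mod (i+t) r).symm
  have h2 : c * i + s + c * t = (c * m + s) + (c * r) * q := by
    have : c * i + c * t = c * (i + t) := by ring
    rw [add_right_comm, this, h1]; ring
  rw [h2, Nat.add_mul_mod_self_left]
  apply Nat.mod_eq_of_lt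
  have hmr : m < r := Nat.mod_lt _ (by omega)
  calc c * m + s < c * m + c := by omega
    _ = c * (m + 1) := by ring
    _ ≤ c * r := Nat.mul_le_mul_left c (by omega)


lemma blocks_ge (c r : ℕ) (hc : 1 ≤ c) (hr : 1 ≤ r) (w : ℕ → ℕ)
    (htop : 2 ^ (c - 1) ≤ w (r - 1)) :
    2 ^ (c * r - 1) ≤ ∑ i ∈ Finset.range r, 2 ^ (c * i) * w i := by
  have hmem : r - 1 ∈ Finset.range r := Finset.mem_range.mpr (by omega)
  have h1 : 2 ^ (c * (r-1)) * w (r-1) ≤ ∑ i ∈ Finset.range r, 2 ^ (c * i) * w i :=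
    Finset.single_le_sum (f := fun i => 2 ^ (c * i) * w i) (fun i _ => Nat.zero_le _) hmem
  have h2 : 2 ^ (c * r - 1) ≤ 2 ^ (c * (r-1)) * w (r-1) := by
    calc 2 ^ (c * r - 1) = 2 ^ (c * (r-1) + (c - 1)) := by
          congr 1
          have : c * (r-1) = c * r - c := by rw [Nat.mul_sub]; ring_nf
          have hcr : c ≤ c * r := Nat.le_mul_of_pos_right c (by omega)
          omega
      _ = 2 ^ (c * (r-1)) * 2 ^ (c-1) := pow_add 2 _ _
      _ ≤ _ := Nat.mul_le_mul_left _ htop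
  omega

lemma rot_blocks (c r t : ℕ) (hc : 1 ≤ c) (hr : 1 ≤ r) (w : ℕ → ℕ)
    (hw : ∀ i < r, w i < 2 ^ c) (htop : 2 ^ (c - 1) ≤ w (r - 1)) :
    R (∑ i ∈ Finset.range r, 2 ^ (c * i) * w i) (c * t)
      = ∑ i ∈ Finset.range r, 2 ^ (c * i) * w ((i + t) % r) := by
  set p := ∑ i ∈ Finset.range r, 2 ^ (c * i) * w i with hp
  have hlt : p < 2 ^ (c * r) := blocks_lt c r w hw
  have hge : 2 ^ (c * r - 1) ≤ p := blocks_ge c r hc hr w htop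
  have hcr : 1 ≤ c * r := Nat.mul_pos (by omega) (by omega)
  by_cases hone : p ≤ 1
  · -- then c = r = 1 and p = 1
    have hp1 : p = 1 := by have : (1:ℕ) ≤ 2 ^ (c*r-1) := Nat.one_le_two_pow; omega
    have hcr1 : c * r - 1 = 0 := by
      by_contra h
      have : 2 ≤ 2 ^ (c * r - 1) := by
        calc (2:ℕ) = 2 ^ 1 := rfl
          _ ≤ 2 ^ (c*r-1) := Nat.pow_le_pow_right (by norm_num) (by omega)
      omega
    have hcr' : c * r = 1 := by omega
    have hr1 : r = 1 := Nat.eq_one_of_mul_eq_one_left hcr'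
    subst hr1
    simp only [R, if_pos hone]
    rw [hp] at hp1 ⊢
    simp only [Finset.sum_range_one, mul_zero, pow_zero, one_mul] at hp1 ⊢
    simp [Nat.mod_one, hp1]
  · have hlog : Nat.log 2 p = c * r - 1 := by
      apply Nat.log_eq_of_pow_le_of_lt_pow hge
      have : c * r - 1 + 1 = c * r := by omega
      rw [this]; exact hlt
    rw [R, if_neg (by omega), hlog]
    have hn : c * r - 1 + 1 = c * r := by omega
    rw [hn]
    rw [sum_grid _ c r]
    apply Finset.sum_congr rfl
    intro i hi
    rw [Finset.mem_range] at hi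
    have hmr : (i + t) % r < r := Nat.mod_lt _ (by omega)
    have : ∑ s ∈ Finset.range c, (if p.testBit ((c * i + s + c * t) % (c * r)) then 1 else 0) * 2 ^ (c * i + s)
        = 2 ^ (c * i) * ∑ s ∈ Finset.range c, (if (w ((i + t) % r)).testBit s then 1 else 0) * 2 ^ s := by
      rw [Finset.mul_sum]
      apply Finset.sum_congr rfl
      intro s hs
      rw [Finset.mem_range] at hs
      rw [grid_mod c r i s t hi hs, blocks_testBit c r _ s w hmr hs hw, pow_add]
      ring
    rw [this, sum_bits c _ (hw _ hmr)]

lemma rot_mod (c r t : ℕ) (hc : 1 ≤ c) (hr : 1 ≤ r) (w : ℕ → ℕ)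
    (hw : ∀ i < r, w i < 2 ^ c) (htop : 2 ^ (c - 1) ≤ w (r - 1)) :
    R (∑ i ∈ Finset.range r, 2 ^ (c * i) * w i) (c * t) % 2 ^ c = w (t % r) := by
  rw [rot_blocks c r t hc hr w hw htop]
  obtain ⟨r', rfl⟩ : ∃ r', r = r' + 1 := ⟨r - 1, by omega⟩
  rw [Finset.sum_range_succ']
  simp only [mul_zero, pow_zero, one_mul, Nat.zero_add]
  have : ∑ i ∈ Finset.range r', 2 ^ (c * (i+1)) * w ((i + 1 + t) % (r'+1))
      = 2 ^ c * ∑ i ∈ Finset.range r', 2 ^ (c * i) * w ((i + 1 + t) % (r'+1)) := by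
    rw [Finset.mul_sum]
    apply Finset.sum_congr rfl
    intro i _
    rw [mul_add, pow_add, mul_one]; ring
  rw [this, Nat.mul_add_mod]
  exact Nat.mod_eq_of_lt (hw _ (Nat.mod_lt _ (by omega)))

/-- `iter f x t = f_{t-1}(f_{t-2}(⋯ f_0(x) ⋯))`. -/
def iter (f : ℕ → ℕ → ℕ) (x : ℕ) : ℕ → ℕ
  | 0 => x
  | t + 1 => f t (iter f x t)

theorem Q_main_property (r : ℕ) (hr : 1 ≤ r) (u v : ℕ → ℕ)
    (f : ℕ → ℕ → ℕ)
    (hf : ∀ i x, f i x =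
      if i % r = r - 1 then x
      else if x &&& u (i % r) = 0 then x + v (i % r) else x)
    (t₀ p₁ p₂ c₁ c₂ x : ℕ)
    (ht₀ : 1 ≤ t₀)
    (hu : u (r - 1) = 2 ^ c₁ - 1)
    (hv₁ : 2 ^ (c₂ - 1) ≤ v (r - 1)) (hv₂ : v (r - 1) < 2 ^ c₂)
    (hp₁ : p₁ = ∑ i ∈ Finset.range r, 2 ^ (c₁ * i) * u i)
    (hp₂ : p₂ = ∑ i ∈ Finset.range r, 2 ^ (c₂ * i) * v i)
    (hx₁ : x + 2 * p₂ * t₀ < 2 ^ c₁)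
    (hx₂ : x + t₀ * ((Finset.range (r - 1)).sup v) < 2 ^ c₂)
    (hub : ∀ i < r - 1, u i < 2 ^ c₂)
    (hc : c₂ ≤ c₁) (hx : 1 ≤ x) :
    Q x p₁ p₂ c₁ c₂ t₀ % 2 ^ c₂ = iter f x t₀ := by
  -- preliminary facts
  have hc₂ : 1 ≤ c₂ := by
    rcases Nat.eq_zero_or_pos c₂ with h | h
    · subst h; simp at hv₁ hv₂; omega
    · exact h
  have hc₁ : 1 ≤ c₁ := le_trans hc₂ hc
  have hS : x + t₀ * ((Finset.range (r - 1)).sup v) < 2 ^ c₂ := hx₂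
  set S := (Finset.range (r - 1)).sup v with hSdef
  have hvS : ∀ i < r - 1, v i ≤ S := fun i hi =>
    Finset.le_sup (Finset.mem_range.mpr hi)
  have hvlt : ∀ i < r, v i < 2 ^ c₂ := by
    intro i hi
    rcases eq_or_lt_of_le (Nat.lt_succ_iff.mp (by omega : i < Nat.succ (r-1))) with h | h
    · rw [h]; exact hv₂
    · have h1 : v i ≤ S := hvS i h
      have h2 : S ≤ t₀ * S := Nat.le_mul_of_pos_left S (by omega)
      omega
  have hult : ∀ i < r, u i < 2 ^ c₁ := by
    intro i hi
    rcases eq_or_lt_of_le (Nat.lt_succ_iff.mp (by omega : i < Nat.succ (r-1))) with h | h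
    · rw [h, hu]
      have : (1:ℕ) ≤ 2 ^ c₁ := Nat.one_le_two_pow
      omega
    · exact lt_of_lt_of_le (hub i h) (Nat.pow_le_pow_right (by norm_num) hc)
  have hutop : 2 ^ (c₁ - 1) ≤ u (r - 1) := by
    rw [hu]
    have h1 : 2 ^ c₁ = 2 * 2 ^ (c₁ - 1) := by
      rw [← pow_succ']
      congr 1; omega
    have h2 : (1:ℕ) ≤ 2 ^ (c₁ - 1) := Nat.one_le_two_pow
    omega
  have hp₂ge : 2 ^ (c₂ * r - 1) ≤ p₂ := by
    rw [hp₂]; exact blocks_ge c₂ r hc₂ hr v hv₁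
  have hrot₁ : ∀ s, R p₁ (c₁ * s) % 2 ^ c₁ = u (s % r) := by
    intro s; rw [hp₁]; exact rot_mod c₁ r s hc₁ hr u hult hutop
  have hrot₂ : ∀ s, R p₂ (c₂ * s) % 2 ^ c₂ = v (s % r) := by
    intro s; rw [hp₂]; exact rot_mod c₂ r s hc₂ hr v hvlt hv₁
  have hrotle : ∀ s, R p₂ (c₂ * s) ≤ 2 * p₂ := by
    intro s
    rw [hp₂, rot_blocks c₂ r s hc₂ hr v hvlt hv₁]
    have h1 : ∑ i ∈ Finset.range r, 2 ^ (c₂ * i) * v ((i + s) % r) < 2 ^ (c₂ * r) :=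
      blocks_lt c₂ r _ (fun i hi => hvlt _ (Nat.mod_lt _ (by omega)))
    have h2 : 2 ^ (c₂ * r) = 2 * 2 ^ (c₂ * r - 1) := by
      rw [← pow_succ']
      congr 1
      have : 1 ≤ c₂ * r := Nat.mul_pos (by omega) (by omega)
      omega
    have h3 : 2 * 2 ^ (c₂ * r - 1) ≤ 2 * p₂ := by omega
    omega
  have hxc₂ : x < 2 ^ c₂ := by
    have : 0 ≤ t₀ * S := Nat.zero_le _
    omega
  -- main induction
  have key : ∀ t ≤ t₀, Q x p₁ p₂ c₁ c₂ t ≤ x + 2 * p₂ * t ∧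
      Q x p₁ p₂ c₁ c₂ t % 2 ^ c₂ = iter f x t ∧
      iter f x t ≤ x + t * S ∧ x ≤ Q x p₁ p₂ c₁ c₂ t := by
    intro t
    induction t with
    | zero =>
      intro _
      refine ⟨by simp [Q], ?_, by simp [iter], by simp [Q]⟩
      simp only [Q, iter]
      exact Nat.mod_eq_of_lt hxc₂
    | succ t ih =>
      intro ht
      obtain ⟨h1, h2, h3, h4⟩ := ih (by omega)
      have hQlt : Q x p₁ p₂ c₁ c₂ t < 2 ^ c₁ := by
        have : 2 * p₂ * t ≤ 2 * p₂ * t₀ := Nat.mul_le_mul_left _ (by omega)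
        omega
      have hand : Q x p₁ p₂ c₁ c₂ t &&& R p₁ (c₁ * t) = Q x p₁ p₂ c₁ c₂ t &&& u (t % r) := by
        rw [and_mod_left hQlt, hrot₁ t]
      have htr : t % r < r := Nat.mod_lt _ (by omega)
      by_cases hmod : t % r = r - 1
      · -- identity step
        have hne : Q x p₁ p₂ c₁ c₂ t &&& R p₁ (c₁ * t) ≠ 0 := by
          rw [hand, hmod, hu, Nat.and_two_pow_sub_one_eq_mod, Nat.mod_eq_of_lt hQlt]
          omega
        have hQs : Q x p₁ p₂ c₁ c₂ (t+1) = Q x p₁ p₂ c₁ c₂ t := by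
          rw [Q, if_pos hne]
        have hIs : iter f x (t+1) = iter f x t := by
          rw [iter, hf, if_pos hmod]
        refine ⟨?_, ?_, ?_, ?_⟩
        · rw [hQs]; have : 2 * p₂ * t ≤ 2 * p₂ * (t+1) := Nat.mul_le_mul_left _ (by omega); omega
        · rw [hQs, hIs]; exact h2
        · rw [hIs]; have : t * S ≤ (t+1) * S := Nat.mul_le_mul_right _ (by omega); omega
        · rw [hQs]; exact h4
      · -- active step
        have htr' : t % r < r - 1 := by omega
        have hulow : u (t % r) < 2 ^ c₂ := hub _ htr'
        have hand2 : Q x p₁ p₂ c₁ c₂ t &&& u (t % r) = iter f x t &&& u (t % r) := by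
          rw [and_mod_right hulow, h2]
        have hIs : iter f x (t+1) =
            if iter f x t &&& u (t % r) = 0 then iter f x t + v (t % r) else iter f x t := by
          rw [iter, hf, if_neg hmod]
        by_cases hz : iter f x t &&& u (t % r) = 0
        · -- addition happens
          have hQcond : ¬ (Q x p₁ p₂ c₁ c₂ t &&& R p₁ (c₁ * t) ≠ 0) := by
            rw [hand, hand2, hz]; simp
          have hQs : Q x p₁ p₂ c₁ c₂ (t+1) = Q x p₁ p₂ c₁ c₂ t + R p₂ (c₂ * t) := by
            rw [Q, if_neg hQcond]
          have hIs' : iter f x (t+1) = iter f x t + v (t % r) := by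
            rw [hIs, if_pos hz]
          have hvSle : v (t % r) ≤ S := hvS _ htr'
          have hIbound : iter f x t + v (t % r) ≤ x + (t+1) * S := by
            have : (t+1) * S = t * S + S := by ring
            omega
          have hIlt : iter f x t + v (t % r) < 2 ^ c₂ := by
            have h5 : (t+1) * S ≤ t₀ * S := Nat.mul_le_mul_right _ (by omega)
            omega
          refine ⟨?_, ?_, ?_, ?_⟩
          · rw [hQs]
            have := hrotle t
            have : 2 * p₂ * (t+1) = 2 * p₂ * t + 2 * p₂ := by ring
            have := hrotle t
            omega
          · rw [hQs, hIs', Nat.add_mod, h2, hrot₂ t]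
            exact Nat.mod_eq_of_lt hIlt
          · rw [hIs']; exact hIbound
          · rw [hQs]; omega
        · -- no addition
          have hQcond : Q x p₁ p₂ c₁ c₂ t &&& R p₁ (c₁ * t) ≠ 0 := by
            rw [hand, hand2]; exact hz
          have hQs : Q x p₁ p₂ c₁ c₂ (t+1) = Q x p₁ p₂ c₁ c₂ t := by
            rw [Q, if_pos hQcond]
          have hIs' : iter f x (t+1) = iter f x t := by rw [hIs, if_neg hz]
          refine ⟨?_, ?_, ?_, ?_⟩
          · rw [hQs]; have : 2 * p₂ * t ≤ 2 * p₂ * (t+1) := Nat.mul_le_mul_left _ (by omega); omega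
          · rw [hQs, hIs']; exact h2
          · rw [hIs']; have : t * S ≤ (t+1) * S := Nat.mul_le_mul_right _ (by omega); omega
          · rw [hQs]; exact h4
  exact (key t₀ le_rfl).2.1
end

section
/- Let n ≥ 1 and 1 ≤ i ≤ n. For each j with 1 ≤ j ≤ 2n define α_j = (2^{2n+1} + 2^{j} − 2^{i}) mod 2^{2n+1} and β_j = (2^{2n+1} + 2^{j} − 2^{i+n}) mod 2^{2n+1}. Then the 8n − 2 numbers consisting of 0, 1, the numbers α_j and α_j + 1 for all j ∈ {1,…,2n} with j ≠ i, and the numbers β_j and β_j + 1 for all j ∈ {1,…,2n} with j ≠ i+n, are pairwise distinct. -/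
lemma pow2_add_inj : ∀ a b c d : ℕ, 2^a + 2^b = 2^c + 2^d → (a = c ∧ b = d) ∨ (a = d ∧ b = c) := by
  have pinj : ∀ x y : ℕ, 2^x = 2^y → x = y :=
    fun x y h => Nat.pow_right_injective (le_refl 2) h
  have pexp : ∀ x : ℕ, 1 ≤ x → 2^x = 2 * 2^(x-1) := by
    intro x hx
    rw [← pow_succ']
    congr 1
    omega
  intro a
  induction a with
  | zero =>
    intro b c d h
    rcases Nat.eq_zero_or_pos b with hb | hb <;>
    rcases Nat.eq_zero_or_pos c with hc | hc <;>
    rcases Nat.eq_zero_or_pos d with hd | hd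
    all_goals subst_vars
    all_goals try simp only [pow_zero] at h
    · left; omega
    · have e1 := pexp d hd; have p1 := Nat.two_pow_pos (d-1); omega
    · have e1 := pexp c hc; have p1 := Nat.two_pow_pos (c-1); omega
    · have e1 := pexp c hc; have e2 := pexp d hd
      have p1 := Nat.two_pow_pos (c-1); have p2 := Nat.two_pow_pos (d-1); omega
    · have e1 := pexp b hb; have p1 := Nat.two_pow_pos (b-1); omega
    · have e1 := pexp b hb; have e2 := pexp d hd
      have : 2^(b-1) = 2^(d-1) := by omega
      have := pinj _ _ this; left; omega
    · have e1 := pexp b hb; have e2 := pexp c hc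
      have : 2^(b-1) = 2^(c-1) := by omega
      have := pinj _ _ this; right; omega
    · have e1 := pexp b hb; have e2 := pexp c hc; have e3 := pexp d hd
      have p1 := Nat.two_pow_pos (b-1); omega
  | succ a IH =>
    intro b c d h
    have ea : 2^(a+1) = 2 * 2^a := by rw [pow_succ]; ring
    rcases Nat.eq_zero_or_pos b with hb | hb <;>
    rcases Nat.eq_zero_or_pos c with hc | hc <;>
    rcases Nat.eq_zero_or_pos d with hd | hd
    all_goals subst_vars
    all_goals try simp only [pow_zero] at h
    · have p1 := Nat.two_pow_pos a; omega
    · have e1 := pexp d hd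
      have : 2^a = 2^(d-1) := by omega
      have := pinj _ _ this; right; omega
    · have e1 := pexp c hc
      have : 2^a = 2^(c-1) := by omega
      have := pinj _ _ this; left; omega
    · have e1 := pexp c hc; have e2 := pexp d hd
      have p1 := Nat.two_pow_pos a; omega
    · have e1 := pexp b hb; have p1 := Nat.two_pow_pos a
      have p2 := Nat.two_pow_pos (b-1); omega
    · have e1 := pexp b hb; have e2 := pexp d hd; omega
    · have e1 := pexp b hb; have e2 := pexp c hc; omega
    · have e1 := pexp b hb; have e2 := pexp c hc; have e3 := pexp d hd
      have h' : 2^a + 2^(b-1) = 2^(c-1) + 2^(d-1) := by omega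
      rcases IH (b-1) (c-1) (d-1) h' with ⟨h1, h2⟩ | ⟨h1, h2⟩ <;> omega

lemma sub_mod (P a b : ℕ) (ha : a ≤ P) (hb1 : 1 ≤ b) (hb : b ≤ P) :
    (2 * P + a - b) % (2 * P) = if b ≤ a then a - b else 2 * P + a - b := by
  have hP : 1 ≤ P := le_trans hb1 hb
  split_ifs with h
  · have e : 2*P + a - b = 2*P + (a - b) := by omega
    rw [e, Nat.add_mod_left, Nat.mod_eq_of_lt (by omega)]
  · exact Nat.mod_eq_of_lt (by omega)

lemma key (n j s k t : ℕ) (hj1 : 1 ≤ j) (hj2 : j ≤ 2*n) (hk1 : 1 ≤ k) (hk2 : k ≤ 2*n)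
    (hs1 : 1 ≤ s) (hs2 : s ≤ 2*n) (ht1 : 1 ≤ t) (ht2 : t ≤ 2*n) :
    ((2^(2*n+1) + 2^j - 2^s) % 2^(2*n+1) = (2^(2*n+1) + 2^k - 2^t) % 2^(2*n+1)) ↔
      2^j + 2^t = 2^k + 2^s := by
  have hM : (2:ℕ)^(2*n+1) = 2 * 2^(2*n) := by rw [pow_succ]; ring
  have hjP : (2:ℕ)^j ≤ 2^(2*n) := Nat.pow_le_pow_right (by norm_num) hj2
  have hkP : (2:ℕ)^k ≤ 2^(2*n) := Nat.pow_le_pow_right (by norm_num) hk2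
  have hsP : (2:ℕ)^s ≤ 2^(2*n) := Nat.pow_le_pow_right (by norm_num) hs2
  have htP : (2:ℕ)^t ≤ 2^(2*n) := Nat.pow_le_pow_right (by norm_num) ht2
  have p1 := Nat.two_pow_pos j
  have p2 := Nat.two_pow_pos k
  have p3 := Nat.two_pow_pos s
  have p4 := Nat.two_pow_pos t
  rw [hM, sub_mod _ _ _ hjP p3 hsP, sub_mod _ _ _ hkP p4 htP]
  split_ifs <;> omega

theorem distinct_shifts (n i : ℕ) (hn : 1 ≤ n) (hi₁ : 1 ≤ i) (hi₂ : i ≤ n) :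
    (({0, 1} : Finset ℕ) ∪
      ((Finset.Icc 1 (2 * n)).filter (· ≠ i)).biUnion
        (fun j => {(2 ^ (2 * n + 1) + 2 ^ j - 2 ^ i) % 2 ^ (2 * n + 1),
          (2 ^ (2 * n + 1) + 2 ^ j - 2 ^ i) % 2 ^ (2 * n + 1) + 1}) ∪
      ((Finset.Icc 1 (2 * n)).filter (· ≠ i + n)).biUnion
        (fun j => {(2 ^ (2 * n + 1) + 2 ^ j - 2 ^ (i + n)) % 2 ^ (2 * n + 1),
          (2 ^ (2 * n + 1) + 2 ^ j - 2 ^ (i + n)) % 2 ^ (2 * n + 1) + 1})).card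
      = 8 * n - 2 := by
  have pinj : ∀ x y : ℕ, 2^x = 2^y → x = y :=
    fun x y h => Nat.pow_right_injective (le_refl 2) h
  have hin1 : 1 ≤ i + n := by omega
  have hin2 : i + n ≤ 2*n := by omega
  have hi2n : i ≤ 2*n := by omega
  -- parity
  have heven : ∀ s j : ℕ, 1 ≤ s → s ≤ 2*n → 1 ≤ j →
      2 ∣ (2^(2*n+1) + 2^j - 2^s) % 2^(2*n+1) := by
    intro s j hs hs' hj
    have h2 : (2:ℕ) ∣ 2^(2*n+1) := dvd_pow_self 2 (by omega)
    rw [Nat.dvd_mod_iff h2]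
    have d1 : (2:ℕ) ∣ 2^s := dvd_pow_self 2 (by omega)
    have d2 : (2:ℕ) ∣ 2^j := dvd_pow_self 2 (by omega)
    have hle : (2:ℕ)^s ≤ 2^(2*n+1) := Nat.pow_le_pow_right (by norm_num) (by omega)
    omega
  -- nonzero
  have hne0 : ∀ s j : ℕ, 1 ≤ s → s ≤ 2*n → 1 ≤ j → j ≤ 2*n → j ≠ s →
      (2^(2*n+1) + 2^j - 2^s) % 2^(2*n+1) ≠ 0 := by
    intro s j hs1 hs2 hj1 hj2 hjs h
    have h0 : (2^(2*n+1) + 2^s - 2^s) % 2^(2*n+1) = 0 := by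
      simp
    have h' := h.trans h0.symm
    rw [key n j s s s hj1 hj2 hs1 hs2 hs1 hs2 hs1 hs2] at h'
    have : (2:ℕ)^j = 2^s := by omega
    exact hjs (pinj _ _ this)
  -- disjointness of B and C
  have hBC : Disjoint
      (((Finset.Icc 1 (2 * n)).filter (· ≠ i)).biUnion
        (fun j => {(2 ^ (2 * n + 1) + 2 ^ j - 2 ^ i) % 2 ^ (2 * n + 1),
          (2 ^ (2 * n + 1) + 2 ^ j - 2 ^ i) % 2 ^ (2 * n + 1) + 1}))
      (((Finset.Icc 1 (2 * n)).filter (· ≠ i + n)).biUnion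
        (fun j => {(2 ^ (2 * n + 1) + 2 ^ j - 2 ^ (i + n)) % 2 ^ (2 * n + 1),
          (2 ^ (2 * n + 1) + 2 ^ j - 2 ^ (i + n)) % 2 ^ (2 * n + 1) + 1})) := by
    rw [Finset.disjoint_left]
    intro x hx hx'
    simp only [Finset.mem_biUnion, Finset.mem_filter, Finset.mem_Icc, Finset.mem_insert,
      Finset.mem_singleton] at hx hx'
    obtain ⟨j, ⟨⟨hj1, hj2⟩, hji⟩, hxj⟩ := hx
    obtain ⟨k, ⟨⟨hk1, hk2⟩, hki⟩, hxk⟩ := hx'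
    have e1 := heven i j hi₁ hi2n hj1
    have e2 := heven (i+n) k hin1 hin2 hk1
    rcases hxj with rfl | rfl <;> rcases hxk with h | h
    · rw [key n j i k (i+n) hj1 hj2 hk1 hk2 hi₁ hi2n hin1 hin2] at h
      rcases pow2_add_inj j (i+n) k i h with ⟨h1, h2⟩ | ⟨h1, h2⟩ <;> omega
    · omega
    · omega
    · have h' : (2 ^ (2 * n + 1) + 2 ^ j - 2 ^ i) % 2 ^ (2 * n + 1)
        = (2 ^ (2 * n + 1) + 2 ^ k - 2 ^ (i+n)) % 2 ^ (2 * n + 1) := by omega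
      rw [key n j i k (i+n) hj1 hj2 hk1 hk2 hi₁ hi2n hin1 hin2] at h'
      rcases pow2_add_inj j (i+n) k i h' with ⟨h1, h2⟩ | ⟨h1, h2⟩ <;> omega
  -- disjointness of A and B (generic in s)
  have hAgen : ∀ s : ℕ, 1 ≤ s → s ≤ 2*n → Disjoint ({0, 1} : Finset ℕ)
      (((Finset.Icc 1 (2 * n)).filter (· ≠ s)).biUnion
        (fun j => {(2 ^ (2 * n + 1) + 2 ^ j - 2 ^ s) % 2 ^ (2 * n + 1),
          (2 ^ (2 * n + 1) + 2 ^ j - 2 ^ s) % 2 ^ (2 * n + 1) + 1})) := by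
    intro s hs1 hs2
    rw [Finset.disjoint_left]
    intro x hx hx'
    simp only [Finset.mem_insert, Finset.mem_singleton] at hx
    simp only [Finset.mem_biUnion, Finset.mem_filter, Finset.mem_Icc, Finset.mem_insert,
      Finset.mem_singleton] at hx'
    obtain ⟨j, ⟨⟨hj1, hj2⟩, hji⟩, hxj⟩ := hx'
    have e1 := heven s j hs1 hs2 hj1
    have n0 := hne0 s j hs1 hs2 hj1 hj2 hji
    rcases hx with rfl | rfl <;> rcases hxj with h | h <;> omega
  -- pairwise disjoint inside biUnion (generic in s)
  have hpair : ∀ s : ℕ, 1 ≤ s → s ≤ 2*n →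
      ∀ j ∈ (Finset.Icc 1 (2 * n)).filter (· ≠ s),
      ∀ k ∈ (Finset.Icc 1 (2 * n)).filter (· ≠ s), j ≠ k →
      Disjoint
        ({(2 ^ (2 * n + 1) + 2 ^ j - 2 ^ s) % 2 ^ (2 * n + 1),
          (2 ^ (2 * n + 1) + 2 ^ j - 2 ^ s) % 2 ^ (2 * n + 1) + 1} : Finset ℕ)
        ({(2 ^ (2 * n + 1) + 2 ^ k - 2 ^ s) % 2 ^ (2 * n + 1),
          (2 ^ (2 * n + 1) + 2 ^ k - 2 ^ s) % 2 ^ (2 * n + 1) + 1} : Finset ℕ) := by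
    intro s hs1 hs2 j hj k hk hjk
    simp only [Finset.mem_filter, Finset.mem_Icc] at hj hk
    obtain ⟨⟨hj1, hj2⟩, hji⟩ := hj
    obtain ⟨⟨hk1, hk2⟩, hki⟩ := hk
    rw [Finset.disjoint_left]
    intro x hx hx'
    simp only [Finset.mem_insert, Finset.mem_singleton] at hx hx'
    have e1 := heven s j hs1 hs2 hj1
    have e2 := heven s k hs1 hs2 hk1
    have hnejk : (2 ^ (2 * n + 1) + 2 ^ j - 2 ^ s) % 2 ^ (2 * n + 1)
        ≠ (2 ^ (2 * n + 1) + 2 ^ k - 2 ^ s) % 2 ^ (2 * n + 1) := by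
      intro h
      rw [key n j s k s hj1 hj2 hk1 hk2 hs1 hs2 hs1 hs2] at h
      have : (2:ℕ)^j = 2^k := by omega
      exact hjk (pinj _ _ this)
    rcases hx with rfl | rfl <;> rcases hx' with h | h <;> omega
  -- counting
  have hcard : ∀ s : ℕ, 1 ≤ s → s ≤ 2*n →
      ((((Finset.Icc 1 (2 * n)).filter (· ≠ s)).biUnion
        (fun j => {(2 ^ (2 * n + 1) + 2 ^ j - 2 ^ s) % 2 ^ (2 * n + 1),
          (2 ^ (2 * n + 1) + 2 ^ j - 2 ^ s) % 2 ^ (2 * n + 1) + 1})).card)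
      = 2 * (2*n - 1) := by
    intro s hs1 hs2
    rw [Finset.card_biUnion (hpair s hs1 hs2)]
    have hc2 : ∀ j ∈ (Finset.Icc 1 (2 * n)).filter (· ≠ s),
        ({(2 ^ (2 * n + 1) + 2 ^ j - 2 ^ s) % 2 ^ (2 * n + 1),
          (2 ^ (2 * n + 1) + 2 ^ j - 2 ^ s) % 2 ^ (2 * n + 1) + 1} : Finset ℕ).card = 2 := by
      intro j _
      rw [Finset.card_insert_of_notMem (by simp), Finset.card_singleton]
    rw [Finset.sum_congr rfl hc2, Finset.sum_const, smul_eq_mul]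
    rw [Finset.filter_ne', Finset.card_erase_of_mem (by simp [Finset.mem_Icc]; omega),
      Nat.card_Icc]
    omega
  rw [Finset.card_union_of_disjoint, Finset.card_union_of_disjoint (hAgen i hi₁ hi2n)]
  · rw [hcard i hi₁ hi2n, hcard (i+n) hin1 hin2]
    have : ({0, 1} : Finset ℕ).card = 2 := by decide
    rw [this]
    omega
  · rw [Finset.disjoint_union_left]
    exact ⟨hAgen (i+n) hin1 hin2, hBC⟩
end

section
/- Let f₁, f₂ : ℕ → ℕ be matchings and A ⊆ ℕ, and suppose: (i) the sets A, f₁(A), f₂(A) are pairwise disjoint; (ii) f₁(x) = x for every x ∈ f₂(A); (iii) f₂(x) = x for every x ∉ A ∪ f₂(A). Then the map g = (f₁∘f₂)⁴∘f₂ satisfies g(x) = f₁(x) for every x ∈ A ∪ f₁(A), and g(x) = x for every x ∉ A ∪ f₁(A); that is, g is the matching that interchanges x and f₁(x) for each x ∈ A and fixes all other points. -/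
theorem matching_delete (f₁ f₂ : ℕ → ℕ) (A : Set ℕ)
    (hf₁ : ∀ x, f₁ (f₁ x) = x) (hf₂ : ∀ x, f₂ (f₂ x) = x)
    (hd₁ : Disjoint A (f₁ '' A)) (hd₂ : Disjoint A (f₂ '' A))
    (hd₃ : Disjoint (f₁ '' A) (f₂ '' A))
    (hfix₁ : ∀ x ∈ f₂ '' A, f₁ x = x)
    (hfix₂ : ∀ x, x ∉ A ∪ f₂ '' A → f₂ x = x) :
    (∀ x ∈ A ∪ f₁ '' A, ((f₁ ∘ f₂)^[4] ∘ f₂) x = f₁ x) ∧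
      (∀ x, x ∉ A ∪ f₁ '' A → ((f₁ ∘ f₂)^[4] ∘ f₂) x = x) := by
  have e1 : ∀ a ∈ f₁ '' A, a ∉ A := fun a h => Set.disjoint_right.mp hd₁ h
  have e2 : ∀ a ∈ f₂ '' A, a ∉ A := fun a h => Set.disjoint_right.mp hd₂ h
  have e3 : ∀ a ∈ f₁ '' A, a ∉ f₂ '' A := fun a h => Set.disjoint_left.mp hd₃ h
  have key : ∀ x, ((f₁ ∘ f₂)^[4] ∘ f₂) x =
      f₁ (f₂ (f₁ (f₂ (f₁ (f₂ (f₁ (f₂ (f₂ x)))))))) := by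
    intro x
    show (f₁ ∘ f₂)^[4] (f₂ x) = _
    rw [show (4:ℕ) = 3+1 from rfl, Function.iterate_succ_apply,
      show (3:ℕ) = 2+1 from rfl, Function.iterate_succ_apply,
      show (2:ℕ) = 1+1 from rfl, Function.iterate_succ_apply,
      Function.iterate_one]
    rfl
  have fixf₂₁ : ∀ a ∈ f₁ '' A, f₂ a = a := fun a h =>
    hfix₂ a (fun hu => hu.elim (e1 a h) (e3 a h))
  constructor
  · intro x hx
    rw [key]
    rcases hx with hx | hx
    · -- x ∈ A
      have h1 : f₂ x ∈ f₂ '' A := ⟨x, hx, rfl⟩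
      have h2 : f₁ x ∈ f₁ '' A := ⟨x, hx, rfl⟩
      rw [hf₂ x, fixf₂₁ _ h2, hf₁ x, hfix₁ _ h1, hf₂ x]
    · -- x ∈ f₁ '' A
      have h2 : f₁ x ∈ A := by
        obtain ⟨a, ha, rfl⟩ := hx; rwa [hf₁]
      have h1 : f₂ x = x := fixf₂₁ _ hx
      have h3 : f₂ (f₁ x) ∈ f₂ '' A := ⟨f₁ x, h2, rfl⟩
      rw [h1, h1, hfix₁ _ h3, hf₂ (f₁ x), hf₁ x, h1]
  · intro x hx
    rw [key]
    have hxA : x ∉ A := fun h' => hx (Or.inl h')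
    have hxf₁ : x ∉ f₁ '' A := fun h' => hx (Or.inr h')
    by_cases h : x ∈ f₂ '' A
    · -- x ∈ f₂ '' A
      have h1 : f₂ x ∈ A := by
        obtain ⟨a, ha, rfl⟩ := h; rwa [hf₂]
      have h2 : f₁ (f₂ x) ∈ f₁ '' A := ⟨f₂ x, h1, rfl⟩
      rw [hf₂ x, hfix₁ _ h, fixf₂₁ _ h2, hf₁ (f₂ x), hf₂ x, hfix₁ _ h]
    · -- x fixed by f₂
      have h1 : f₂ x = x := hfix₂ x (fun hu => hu.elim hxA h)
      have h2 : f₂ (f₁ x) = f₁ x := by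
        apply hfix₂
        rintro (hu | hu)
        · exact hxf₁ ⟨f₁ x, hu, hf₁ x⟩
        · have := hfix₁ _ hu
          rw [hf₁] at this
          exact h (this ▸ hu)
      rw [h1, h1, h2, hf₁ x, h1, h2, hf₁ x]
end

section
/- Let B be a set of quadruples (b₁,b₂,b₃,b₄) of natural numbers such that all components occurring in quadruples of B are pairwise distinct (both within each quadruple and across different quadruples), and let A ⊆ ℕ contain every component of every quadruple of B. Let f be the matching that interchanges b₁ ↔ b₃ and b₂ ↔ b₄ for every (b₁,b₂,b₃,b₄) ∈ B and fixes all other points; let f₁′ be the matching that interchanges b₁ ↔ b₂ and b₃ ↔ b₄ for every (b₁,b₂,b₃,b₄) ∈ B and fixes all other points; and let f₂′ be the matching that interchanges b₁ ↔ b₃ for every (b₁,b₂,b₃,b₄) ∈ B and fixes all other points. Let f₁″ and f₂″ be matchings over sets A₁″ and A₂″ respectively, where A, A₁″, A₂″ are pairwise disjoint, and set f₁ = f₁′∘f₁″ and f₂ = f₂′∘f₂″. Then f = (f₁∘f₂)². -/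
theorem matching_mega_delete (B : Set (Fin 4 → ℕ)) (A A₁ A₂ : Set ℕ)
    (hdist : ∀ b ∈ B, ∀ b' ∈ B, ∀ k k' : Fin 4, (b ≠ b' ∨ k ≠ k') → b k ≠ b' k')
    (hBA : ∀ b ∈ B, ∀ k : Fin 4, b k ∈ A)
    (f f₁' f₂' f₁'' f₂'' : ℕ → ℕ)
    (hfB : ∀ b ∈ B,
      f (b 0) = b 2 ∧ f (b 2) = b 0 ∧ f (b 1) = b 3 ∧ f (b 3) = b 1)
    (hffix : ∀ x, (∀ b ∈ B, ∀ k : Fin 4, x ≠ b k) → f x = x)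
    (hf₁'B : ∀ b ∈ B,
      f₁' (b 0) = b 1 ∧ f₁' (b 1) = b 0 ∧ f₁' (b 2) = b 3 ∧ f₁' (b 3) = b 2)
    (hf₁'fix : ∀ x, (∀ b ∈ B, ∀ k : Fin 4, x ≠ b k) → f₁' x = x)
    (hf₂'B : ∀ b ∈ B, f₂' (b 0) = b 2 ∧ f₂' (b 2) = b 0)
    (hf₂'fix : ∀ x, (∀ b ∈ B, x ≠ b 0 ∧ x ≠ b 2) → f₂' x = x)
    (hf₁'' : ∀ x, f₁'' (f₁'' x) = x) (hf₁''fix : ∀ x ∉ A₁, f₁'' x = x)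
    (hf₂'' : ∀ x, f₂'' (f₂'' x) = x) (hf₂''fix : ∀ x ∉ A₂, f₂'' x = x)
    (hAA₁ : Disjoint A A₁) (hAA₂ : Disjoint A A₂) (hA₁₂ : Disjoint A₁ A₂) :
    f = ((f₁' ∘ f₁'') ∘ (f₂' ∘ f₂'')) ∘ ((f₁' ∘ f₁'') ∘ (f₂' ∘ f₂'')) := by
  -- components are not in A₁ or A₂
  have hA1fix : ∀ b ∈ B, ∀ j : Fin 4, f₁'' (b j) = b j := fun b hb j =>
    hf₁''fix _ (fun h => Set.disjoint_left.mp hAA₁ (hBA b hb j) h)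
  have hA2fix : ∀ b ∈ B, ∀ j : Fin 4, f₂'' (b j) = b j := fun b hb j =>
    hf₂''fix _ (fun h => Set.disjoint_left.mp hAA₂ (hBA b hb j) h)
  -- anything outside A is not a component
  have hnotA : ∀ y, y ∉ A → ∀ b ∈ B, ∀ k : Fin 4, y ≠ b k :=
    fun y hy b hb k h => hy (h ▸ hBA b hb k)
  have fix2 : ∀ y, (∀ b ∈ B, ∀ k : Fin 4, y ≠ b k) → f₂' y = y :=
    fun y hy => hf₂'fix y (fun b hb => ⟨hy b hb 0, hy b hb 2⟩)
  -- closure of f₁'' on A₁, f₂'' on A₂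
  have cl₁ : ∀ x ∈ A₁, f₁'' x ∈ A₁ := by
    intro x hx
    by_contra h
    have h2 := hf₁''fix _ h
    rw [hf₁'' x] at h2
    exact h (h2 ▸ hx)
  have cl₂ : ∀ x ∈ A₂, f₂'' x ∈ A₂ := by
    intro x hx
    by_contra h
    have h2 := hf₂''fix _ h
    rw [hf₂'' x] at h2
    exact h (h2 ▸ hx)
  funext x
  simp only [Function.comp_apply]
  by_cases hc : ∃ b ∈ B, ∃ k : Fin 4, x = b k
  · obtain ⟨b, hb, k, rfl⟩ := hc
    obtain ⟨h02, h20, h13, h31⟩ := hfB b hb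
    obtain ⟨p01, p10, p23, p32⟩ := hf₁'B b hb
    obtain ⟨q02, q20⟩ := hf₂'B b hb
    have q1 : f₂' (b 1) = b 1 := hf₂'fix _ (fun b' hb' =>
      ⟨hdist b hb b' hb' 1 0 (Or.inr (by decide)),
       hdist b hb b' hb' 1 2 (Or.inr (by decide))⟩)
    have q3 : f₂' (b 3) = b 3 := hf₂'fix _ (fun b' hb' =>
      ⟨hdist b hb b' hb' 3 0 (Or.inr (by decide)),
       hdist b hb b' hb' 3 2 (Or.inr (by decide))⟩)
    fin_cases k
    · show f (b 0) = f₁' (f₁'' (f₂' (f₂'' (f₁' (f₁'' (f₂' (f₂'' (b 0))))))))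
      rw [h02, hA2fix b hb 0, q02, hA1fix b hb 2, p23, hA2fix b hb 3, q3,
        hA1fix b hb 3, p32]
    · show f (b 1) = f₁' (f₁'' (f₂' (f₂'' (f₁' (f₁'' (f₂' (f₂'' (b 1))))))))
      rw [h13, hA2fix b hb 1, q1, hA1fix b hb 1, p10, hA2fix b hb 0, q02,
        hA1fix b hb 2, p23]
    · show f (b 2) = f₁' (f₁'' (f₂' (f₂'' (f₁' (f₁'' (f₂' (f₂'' (b 2))))))))
      rw [h20, hA2fix b hb 2, q20, hA1fix b hb 0, p01, hA2fix b hb 1, q1,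
        hA1fix b hb 1, p10]
    · show f (b 3) = f₁' (f₁'' (f₂' (f₂'' (f₁' (f₁'' (f₂' (f₂'' (b 3))))))))
      rw [h31, hA2fix b hb 3, q3, hA1fix b hb 3, p32, hA2fix b hb 2, q20,
        hA1fix b hb 0, p01]
  · push_neg at hc
    have hnc : ∀ b ∈ B, ∀ k : Fin 4, x ≠ b k := hc
    rw [hffix x hnc]
    by_cases h2 : x ∈ A₂
    · -- y = f₂'' x stays in A₂, not a component
      have hy : f₂'' x ∈ A₂ := cl₂ x h2
      have hyA : f₂'' x ∉ A := Set.disjoint_right.mp hAA₂ hy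
      have hync := hnotA _ hyA
      have hyA₁ : f₂'' x ∉ A₁ := Set.disjoint_right.mp hA₁₂ hy
      have hxA₁ : x ∉ A₁ := Set.disjoint_right.mp hA₁₂ h2
      rw [fix2 _ hync, hf₁''fix _ hyA₁, hf₁'fix _ hync, hf₂'' x,
        fix2 _ hnc, hf₁''fix _ hxA₁, hf₁'fix _ hnc]
    · rw [hf₂''fix _ h2, fix2 _ hnc]
      by_cases h1 : x ∈ A₁
      · have hz : f₁'' x ∈ A₁ := cl₁ x h1
        have hzA : f₁'' x ∉ A := Set.disjoint_right.mp hAA₁ hz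
        have hznc := hnotA _ hzA
        have hzA₂ : f₁'' x ∉ A₂ := Set.disjoint_left.mp hA₁₂ hz
        rw [hf₁'fix _ hznc, hf₂''fix _ hzA₂, fix2 _ hznc, hf₁'' x,
          hf₁'fix _ hnc]
      · rw [hf₁''fix _ h1, hf₁'fix _ hnc, hf₂''fix _ h2, fix2 _ hnc,
          hf₁''fix _ h1, hf₁'fix _ hnc]
end
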